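/- Let E be a real inner product space, w ∈ E with w ≠ 0, α > 0, α' ≥ 0, z ∈ E. If x ∈ E maximizes the utility u(y) = (1 if ⟪y, w⟫ ≥ α'·‖w‖ else 0) − ‖y − z‖/α over all y ∈ E, then it is not the case that (α' − α)·‖w‖ < ⟪x, w⟫ < α'·‖w‖. -/

import Mathlib

open RealInnerProductSpace

theorem strategic_best_response_shifted_forbidden_region
    {E : Type*} [NormedAddCommGroup E] [InnerProductSpace ℝ E]
    (w : E) (hw : w ≠ 0) (α α' : ℝ) (hα : 0 < α) (hα' : 0 ≤ α') (z x : E)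
    (hmax : ∀ y : E,
      ((if ⟪y, w⟫ ≥ α' * ‖w‖ then (1 : ℝ) else 0) - ‖y - z‖ / α) ≤
        ((if ⟪x, w⟫ ≥ α' * ‖w‖ then (1 : ℝ) else 0) - ‖x - z‖ / α)) :
    ¬ ((α' - α) * ‖w‖ < ⟪x, w⟫ ∧ ⟪x, w⟫ < α' * ‖w‖) := by
  rintro ⟨h1, h2⟩
  have hwn : (0:ℝ) < ‖w‖ := norm_pos_iff.mpr hw
  set c := ⟪x, w⟫ with hc
  set t : ℝ := (α' * ‖w‖ - c) / ‖w‖ with ht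
  have ht0 : 0 < t := div_pos (by linarith) hwn
  have htα : t < α := by
    rw [ht, div_lt_iff₀ hwn]
    nlinarith
  set y := x + ((α' * ‖w‖ - c) / ‖w‖ ^ 2) • w with hy
  have hyinner : ⟪y, w⟫ = α' * ‖w‖ := by
    rw [hy, inner_add_left, real_inner_smul_left, real_inner_self_eq_norm_sq]
    rw [← hc]
    field_simp
    ring
  have hnorm : ‖y - x‖ = t := by
    have hyx : y - x = ((α' * ‖w‖ - c) / ‖w‖ ^ 2) • w := by rw [hy]; abel
    rw [hyx, norm_smul, Real.norm_eq_abs,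
      abs_of_nonneg (div_nonneg (by linarith) (by positivity))]
    rw [ht]
    field_simp
  have key := hmax y
  rw [if_pos (ge_of_eq hyinner), if_neg (not_le.mpr h2)] at key
  have k2 : α - ‖y - z‖ ≤ -‖x - z‖ := by
    have h := mul_le_mul_of_nonneg_right key (le_of_lt hα)
    rw [sub_mul, sub_mul, div_mul_cancel₀ _ (ne_of_gt hα), div_mul_cancel₀ _ (ne_of_gt hα)] at h
    linarith
  have tri : ‖y - z‖ ≤ t + ‖x - z‖ := by
    calc ‖y - z‖ = ‖(y - x) + (x - z)‖ := by abel_nf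
    _ ≤ ‖y - x‖ + ‖x - z‖ := norm_add_le _ _
    _ = t + ‖x - z‖ := by rw [hnorm]
  linarith
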